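/- Suppose ω is irrational and φ : 𝕋¹ → ℝ is continuous with ∫ φ = 0 such that the cohomological equation ψ(θ+ω) − ψ(θ) = φ(θ) admits no continuous solution ψ. Then the linear fibered holomorphic dynamics F(θ,z) = (θ+ω, e^{φ(θ)} z) has the zero section as an indifferent invariant curve which is not stable (admits no bounded open invariant tube with simply connected fibers containing the zero section). -/

import Mathlib

open Metric Set MeasureTheory

instance : Fact ((0:ℝ) < 1) := ⟨one_pos⟩

/-- The circle `𝕋¹ = ℝ/ℤ`. -/
abbrev Torus1 := AddCircle (1:ℝ)

namespace FurstAux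

lemma norm_coe_le (x : ℝ) : ‖((x : ℝ) : Torus1)‖ ≤ |x| := by
  simpa [Real.norm_eq_abs] using QuotientAddGroup.norm_mk_le_norm (S := AddSubgroup.zmultiples (1:ℝ)) (m := x)

lemma step_dense {y : Torus1} (hy : y ≠ 0) {ε : ℝ} (hyε : ‖y‖ < ε) (t : Torus1) :
    ∃ j : ℕ, dist (j • y) t ≤ ε := by
  obtain ⟨r, hr, rfl⟩ := AddCircle.eq_coe_Ico y
  obtain ⟨s, hs, rfl⟩ := AddCircle.eq_coe_Ico t
  have hr0 : 0 < r := hr.1.lt_of_ne (fun h =>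
    hy ((AddCircle.coe_eq_zero_iff_of_mem_Ico (by simpa using hr)).mpr h.symm))
  have hnorm : ‖((r : ℝ) : Torus1)‖ = min r (1 - r) := by
    rw [UnitAddCircle.norm_eq, abs_sub_round_eq_min, Int.fract_eq_self.mpr ⟨hr.1, hr.2⟩]
  have hmin : min r (1 - r) < ε := hnorm ▸ hyε
  have key : ∀ j : ℕ, (j • (((r:ℝ)) : Torus1) : Torus1) = ((((j:ℝ) * r : ℝ)) : Torus1) := by
    intro j
    rw [← AddCircle.coe_nsmul]
    norm_num
  rcases min_lt_iff.mp hmin with hcase | hcase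
  · -- r < ε
    have hs0 : 0 ≤ s / r := div_nonneg hs.1 hr0.le
    refine ⟨⌊s / r⌋₊, ?_⟩
    have h1 : (⌊s / r⌋₊ : ℝ) * r ≤ s := by
      rw [← le_div_iff₀ hr0]; exact Nat.floor_le hs0
    have h2 : s < ((⌊s / r⌋₊ : ℝ) + 1) * r := by
      rw [← div_lt_iff₀ hr0]; exact Nat.lt_floor_add_one _
    rw [key, dist_eq_norm, ← AddCircle.coe_sub]
    refine le_trans (norm_coe_le _) ?_
    rw [abs_le]
    constructor <;> nlinarith
  · -- 1 - r < ε
    set q := 1 - r with hq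
    have hq0 : 0 < q := by simp [hq]; linarith [hr.2]
    set u := 1 - s with hu
    have hu0 : 0 ≤ u / q := div_nonneg (by simp [hu]; linarith [hs.2]) hq0.le
    refine ⟨⌊u / q⌋₊, ?_⟩
    set j := ⌊u / q⌋₊
    have h1 : (j : ℝ) * q ≤ u := by
      rw [← le_div_iff₀ hq0]; exact Nat.floor_le hu0
    have h2 : u < ((j:ℝ) + 1) * q := by
      rw [← div_lt_iff₀ hq0]; exact Nat.lt_floor_add_one _
    rw [key, dist_eq_norm, ← AddCircle.coe_sub]
    have hrw : ((((j:ℝ) * r - s : ℝ)) : Torus1) = (((u - (j:ℝ) * q : ℝ)) : Torus1) := by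
      have : ((j:ℝ) * r - s) = (u - (j:ℝ)*q) + (((j:ℤ) - 1 : ℤ) : ℝ) * 1 := by
        push_cast; simp only [hq, hu]; ring
      rw [this, AddCircle.coe_add]
      have : ((((((j:ℤ) - 1 : ℤ) : ℝ) * 1 : ℝ)) : Torus1) = 0 := by
        rw [AddCircle.coe_eq_zero_iff]
        exact ⟨(j:ℤ) - 1, by push_cast [zsmul_eq_mul]; ring⟩
      rw [this, add_zero]
    rw [hrw]
    refine le_trans (norm_coe_le _) ?_
    rw [abs_le]
    constructor <;> nlinarith


lemma nsmul_ne_zero {ω : ℝ} (hω : Irrational ω) {k : ℕ} (hk : 0 < k) :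
    (k • ((ω : ℝ) : Torus1) : Torus1) ≠ 0 := by
  intro h
  rw [← AddCircle.coe_nsmul, AddCircle.coe_eq_zero_iff] at h
  revert h
  rintro ⟨m, hm⟩
  rw [zsmul_eq_mul, mul_one, nsmul_eq_mul] at hm
  exact hω ⟨(m : ℚ) / (k : ℚ), by
    push_cast
    field_simp
    rw [mul_comm]
    rw [mul_comm]; exact_mod_cast hm⟩

lemma forward_dense {ω : ℝ} (hω : Irrational ω) (x t : Torus1) {ε : ℝ} (hε : 0 < ε) :
    ∃ n : ℕ, dist (x + n • ((ω : ℝ) : Torus1)) t ≤ ε := by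
  set a : ℕ → Torus1 := fun n => n • ((ω : ℝ) : Torus1) with ha
  obtain ⟨L, -, s, hs_mono, hs_tend⟩ :=
    isCompact_univ.tendsto_subseq (x := a) (fun n => mem_univ _)
  obtain ⟨N, hN⟩ := Metric.tendsto_atTop.mp hs_tend (ε/2) (by linarith)
  have hlt : s N < s (N+1) := hs_mono (Nat.lt_succ_self N)
  set k := s (N+1) - s N with hk
  have hk0 : 0 < k := Nat.sub_pos_of_lt hlt
  have hdist : dist (a (s (N+1))) (a (s N)) < ε :=
    calc dist (a (s (N+1))) (a (s N)) ≤ dist (a (s (N+1))) L + dist (a (s N)) L :=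
          dist_triangle_right _ _ _
      _ < ε/2 + ε/2 := add_lt_add (hN (N+1) (Nat.le_succ N)) (hN N le_rfl)
      _ = ε := by ring
  have hkey : a (s (N+1)) = a (s N) + k • ((ω : ℝ) : Torus1) := by
    rw [ha]
    simp only []
    rw [← add_nsmul, Nat.add_sub_cancel' hlt.le]
  set y := k • ((ω : ℝ) : Torus1) with hy
  have hyn : ‖y‖ < ε := by
    have : a (s (N+1)) - a (s N) = y := by rw [hkey]; abel
    rw [← this]
    simpa [dist_eq_norm] using hdist
  obtain ⟨j, hj⟩ := step_dense (nsmul_ne_zero hω hk0) hyn (t - x)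
  refine ⟨j * k, ?_⟩
  have : (j * k) • ((ω : ℝ) : Torus1) = j • y := by rw [hy, mul_comm, mul_nsmul]
  rw [this]
  calc dist (x + j • y) t = dist (j • y) (t - x) := by
        rw [dist_eq_norm, dist_eq_norm]; congr 1; abel
    _ ≤ ε := hj

lemma invariant_closed_eq_univ {ω : ℝ} (hω : Irrational ω) {S : Set Torus1}
    (hcl : IsClosed S) (hne : S.Nonempty)
    (hinv : ∀ θ ∈ S, θ + ((ω : ℝ) : Torus1) ∈ S) : S = univ := by
  obtain ⟨θ, hθ⟩ := hne
  have horb : ∀ n : ℕ, θ + n • ((ω : ℝ) : Torus1) ∈ S := by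
    intro n
    induction n with
    | zero => simpa using hθ
    | succ n ih =>
        have := hinv _ ih
        rwa [add_assoc, ← succ_nsmul] at this
  refine eq_univ_of_forall fun t => ?_
  rw [← hcl.closure_eq]
  rw [Metric.mem_closure_iff]
  intro ε hε
  obtain ⟨n, hn⟩ := forward_dense hω θ t (half_pos hε)
  exact ⟨θ + n • ((ω : ℝ) : Torus1), horb n, by
    rw [dist_comm]; linarith⟩


/-- Birkhoff sums of `φ` along the rotation by `ω`. -/
noncomputable def birk (ω : ℝ) (φ : Torus1 → ℝ) (n : ℕ) (θ : Torus1) : ℝ :=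
  ∑ k ∈ Finset.range n, φ (θ + k • ((ω : ℝ) : Torus1))

lemma birk_zero (ω : ℝ) (φ : Torus1 → ℝ) (θ : Torus1) : birk ω φ 0 θ = 0 := by
  simp [birk]

lemma birk_succ (ω : ℝ) (φ : Torus1 → ℝ) (n : ℕ) (θ : Torus1) :
    birk ω φ (n+1) θ = birk ω φ n θ + φ (θ + n • ((ω : ℝ) : Torus1)) := by
  simp [birk, Finset.sum_range_succ]

lemma birk_add (ω : ℝ) (φ : Torus1 → ℝ) (m n : ℕ) (θ : Torus1) :
    birk ω φ (m+n) θ = birk ω φ m θ + birk ω φ n (θ + m • ((ω : ℝ) : Torus1)) := by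
  induction n with
  | zero => simp [birk_zero]
  | succ n ih =>
      rw [← Nat.add_assoc, birk_succ, birk_succ, ih, add_nsmul, ← add_assoc θ]
      ring

lemma birk_continuous (ω : ℝ) {φ : Torus1 → ℝ} (hφ : Continuous φ) (n : ℕ) :
    Continuous (birk ω φ n) := by
  unfold birk
  exact continuous_finset_sum _ fun k _ => hφ.comp (continuous_add_right _)

/-- The Gottschalk–Hedlund argument: if the Birkhoff sums at one point are bounded,
the cohomological equation has a continuous solution. -/
lemma gottschalk_hedlund {ω : ℝ} (hω : Irrational ω) {φ : Torus1 → ℝ} (hφ : Continuous φ)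
    {C : ℝ} {θ₀ : Torus1} (hbd : ∀ n : ℕ, |birk ω φ n θ₀| ≤ C) :
    ∃ ψ : Torus1 → ℝ, Continuous ψ ∧
      ∀ θ : Torus1, ψ (θ + ((ω : ℝ) : Torus1)) - ψ θ = φ θ := by
  classical
  set ω' : Torus1 := ((ω : ℝ) : Torus1) with hω'
  set Φ : Torus1 × ℝ → Torus1 × ℝ := fun p => (p.1 + ω', p.2 + φ p.1) with hΦdef
  have hΦcont : Continuous Φ :=
    (continuous_fst.add continuous_const).prodMk (continuous_snd.add (hφ.comp continuous_fst))
  -- iterate formula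
  have hiter : ∀ (n : ℕ) (θ : Torus1) (u : ℝ),
      Φ^[n] (θ, u) = (θ + n • ω', u + birk ω φ n θ) := by
    intro n
    induction n with
    | zero => intro θ u; simp [birk_zero]
    | succ n ih =>
        intro θ u
        rw [Function.iterate_succ_apply', ih]
        simp only [hΦdef]
        refine Prod.ext ?_ ?_
        · simp only []
          rw [add_assoc, ← succ_nsmul]
        · simp only []
          rw [birk_succ]; ring
  -- the orbit closure of (θ₀, 0)
  have box_compact : IsCompact ((univ : Set Torus1) ×ˢ Icc (-C) C) :=
    isCompact_univ.prod isCompact_Icc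
  have box_closed : IsClosed ((univ : Set Torus1) ×ˢ Icc (-C) C) :=
    isClosed_univ.prod isClosed_Icc
  -- generic facts about orbit closures
  have orbit_mem : ∀ z : Torus1 × ℝ, z ∈ closure (range fun n : ℕ => Φ^[n] z) :=
    fun z => subset_closure ⟨0, rfl⟩
  have orbit_inv : ∀ z : Torus1 × ℝ,
      MapsTo Φ (closure (range fun n : ℕ => Φ^[n] z)) (closure (range fun n : ℕ => Φ^[n] z)) := by
    intro z x hx
    have h1 : Φ x ∈ closure (Φ '' range fun n : ℕ => Φ^[n] z) :=
      image_closure_subset_closure_image hΦcont (mem_image_of_mem Φ hx)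
    refine closure_mono ?_ h1
    rintro - ⟨-, ⟨n, rfl⟩, rfl⟩
    exact ⟨n+1, by simp [Function.iterate_succ_apply']⟩
  set A : Set (Torus1 × ℝ) := closure (range fun n : ℕ => Φ^[n] (θ₀, (0:ℝ))) with hA
  have hAbox : A ⊆ (univ : Set Torus1) ×ˢ Icc (-C) C := by
    refine closure_minimal ?_ box_closed
    rintro - ⟨n, rfl⟩
    show Φ^[n] (θ₀, (0:ℝ)) ∈ _
    rw [hiter]
    exact ⟨mem_univ _, by simpa [abs_le] using hbd n⟩
  have hAcompact : IsCompact A := box_compact.of_isClosed_subset isClosed_closure hAbox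
  -- Zorn: minimal nonempty closed invariant subset
  set 𝒮 : Set (Set (Torus1 × ℝ)) :=
    {K | K ⊆ A ∧ K.Nonempty ∧ IsClosed K ∧ MapsTo Φ K K} with h𝒮
  have hA𝒮 : A ∈ 𝒮 := ⟨le_rfl, ⟨_, orbit_mem _⟩, isClosed_closure, orbit_inv _⟩
  obtain ⟨K, -, hKmin⟩ := zorn_superset_nonempty 𝒮 (fun c hc hchain hcne => by
    refine ⟨⋂₀ c, ⟨?_, ?_, ?_, ?_⟩, fun s hs => sInter_subset_of_mem hs⟩
    · obtain ⟨s, hs⟩ := hcne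
      exact (sInter_subset_of_mem hs).trans (hc hs).1
    · -- nonempty via compactness
      haveI : Nonempty c := hcne.to_subtype
      have hdir : Directed (· ⊇ ·) (fun s : c => (s : Set (Torus1 × ℝ))) := by
        rintro ⟨s, hs⟩ ⟨t, ht⟩
        rcases hchain.total hs ht with h | h
        · exact ⟨⟨s, hs⟩, le_rfl, h⟩
        · exact ⟨⟨t, ht⟩, h, le_rfl⟩
      have := IsCompact.nonempty_iInter_of_directed_nonempty_isCompact_isClosed
        (fun s : c => (s : Set (Torus1 × ℝ))) hdir
        (fun s => (hc s.2).2.1)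
        (fun s => hAcompact.of_isClosed_subset (hc s.2).2.2.1 (hc s.2).1)
        (fun s => (hc s.2).2.2.1)
      rwa [sInter_eq_iInter]
    · exact isClosed_sInter fun s hs => (hc hs).2.2.1
    · intro x hx
      rw [mem_sInter] at hx ⊢
      exact fun s hs => (hc hs).2.2.2 (hx s hs)) A hA𝒮
  obtain ⟨⟨hKA, hKne, hKcl, hKinv⟩, hKm⟩ := hKmin
  have hKcompact : IsCompact K := hAcompact.of_isClosed_subset hKcl hKA
  -- every orbit closure inside K equals K
  have horbK : ∀ z ∈ K, closure (range fun n : ℕ => Φ^[n] z) = K := by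
    intro z hz
    have hsub : closure (range fun n : ℕ => Φ^[n] z) ⊆ K := by
      refine closure_minimal ?_ hKcl
      rintro - ⟨n, rfl⟩
      induction n with
      | zero => exact hz
      | succ n ih =>
          show Φ^[n+1] z ∈ K
          rw [Function.iterate_succ_apply']
          exact hKinv ih
    have : closure (range fun n : ℕ => Φ^[n] z) ∈ 𝒮 :=
      ⟨hsub.trans hKA, ⟨_, orbit_mem _⟩, isClosed_closure, orbit_inv _⟩
    exact le_antisymm hsub (hKm this hsub)
  -- the projection of K is everything
  have hproj : Prod.fst '' K = univ := by
    refine invariant_closed_eq_univ hω ((hKcompact.image continuous_fst).isClosed) (hKne.image _) ?_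
    rintro - ⟨z, hz, rfl⟩
    exact ⟨Φ z, hKinv hz, rfl⟩
  -- K is a graph
  have hgraph : ∀ (θ : Torus1) (s t : ℝ), (θ, s) ∈ K → (θ, t) ∈ K → s = t := by
    intro θ s t hsK htK
    by_contra hne
    set c : ℝ := t - s with hc
    have hc0 : c ≠ 0 := sub_ne_zero.mpr (Ne.symm hne)
    set τ : (Torus1 × ℝ) ≃ₜ (Torus1 × ℝ) :=
      (Homeomorph.refl Torus1).prodCongr (Homeomorph.addRight c) with hτ
    have hτapp : ∀ p : Torus1 × ℝ, τ p = (p.1, p.2 + c) := fun p => rfl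
    have hcomm : ∀ (n : ℕ) (p : Torus1 × ℝ), τ (Φ^[n] p) = Φ^[n] (τ p) := by
      intro n p
      rw [hτapp, hτapp]
      obtain ⟨θ', u⟩ := p
      rw [hiter, hiter]
      simp only []
      refine Prod.ext rfl ?_
      simp only []
      ring
    have hτK : τ '' K = K := by
      rw [← horbK (θ, s) hsK, Homeomorph.image_closure, ← range_comp]
      have : (τ ∘ fun n : ℕ => Φ^[n] (θ, s)) = fun n : ℕ => Φ^[n] (θ, t) := by
        funext n
        simp only [Function.comp_apply]
        rw [hcomm, hτapp]
        norm_num [hc]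
      rw [this, horbK (θ, t) htK, horbK (θ, s) hsK]
    -- iterate the translation
    have hiterτ : ∀ n : ℕ, (θ, s + n * c) ∈ K := by
      intro n
      induction n with
      | zero => simpa using hsK
      | succ n ih =>
          have := hτK ▸ mem_image_of_mem τ ih
          rw [hτapp] at this
          simpa [add_mul, add_assoc] using this
    obtain ⟨n, hn⟩ := exists_nat_gt ((C + |s|) / |c|)
    have hcpos : 0 < |c| := abs_pos.mpr hc0
    have hgt : C + |s| < n * |c| := by
      rwa [div_lt_iff₀ hcpos] at hn
    have hmem := hAbox (hKA (hiterτ n))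
    have habs : |s + n * c| ≤ C := by
      rcases hmem with ⟨-, h2⟩
      rw [abs_le]; exact h2
    have : (n : ℝ) * |c| ≤ C + |s| := by
      calc (n:ℝ) * |c| = |(n:ℝ) * c| := by rw [abs_mul, Nat.abs_cast]
        _ = |s + n * c - s| := by ring_nf
        _ ≤ |s + n * c| + |s| := abs_sub _ _
        _ ≤ C + |s| := by linarith
    linarith
  -- build ψ
  haveI : CompactSpace K := isCompact_iff_compactSpace.mp hKcompact
  have hbij : Function.Bijective (fun z : K => (z : Torus1 × ℝ).1) := by
    constructor
    · rintro ⟨⟨θ₁, u₁⟩, h₁⟩ ⟨⟨θ₂, u₂⟩, h₂⟩ h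
      simp only at h
      subst h
      exact Subtype.ext (Prod.ext rfl (hgraph _ _ _ h₁ h₂))
    · intro θ
      have : θ ∈ Prod.fst '' K := hproj ▸ mem_univ θ
      obtain ⟨z, hz, hz1⟩ := this
      exact ⟨⟨z, hz⟩, hz1⟩
  set e : K ≃ Torus1 := Equiv.ofBijective _ hbij with he
  have hecont : Continuous (e : K → Torus1) := continuous_fst.comp continuous_subtype_val
  set h : K ≃ₜ Torus1 := Continuous.homeoOfEquivCompactToT2 (f := e) hecont with hh
  set ψ : Torus1 → ℝ := fun θ => ((h.symm θ : K) : Torus1 × ℝ).2 with hψ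
  have hmemK : ∀ θ : Torus1, (θ, ψ θ) ∈ K := by
    intro θ
    have h1 : ((h.symm θ : K) : Torus1 × ℝ).1 = θ := h.apply_symm_apply θ
    have h2 : ((h.symm θ : K) : Torus1 × ℝ) ∈ K := (h.symm θ).2
    have h3 : ((h.symm θ : K) : Torus1 × ℝ) = (θ, ψ θ) := Prod.ext h1 rfl
    exact h3 ▸ h2
  refine ⟨ψ, ?_, ?_⟩
  · exact continuous_snd.comp (continuous_subtype_val.comp h.symm.continuous)
  · intro θ
    have h1 : (θ + ω', ψ θ + φ θ) ∈ K := hKinv (hmemK θ)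
    have h2 : (θ + ω', ψ (θ + ω')) ∈ K := hmemK _
    have := hgraph _ _ _ h2 h1
    rw [this]; ring


end FurstAux

open FurstAux in
/-- **Furstenberg-type example: an indifferent but unstable invariant curve.**
If `ω` is irrational and `φ : 𝕋¹ → ℝ` is continuous with zero mean such that the
cohomological equation `ψ(θ+ω) − ψ(θ) = φ(θ)` has no continuous solution, then the linear
fibered dynamics `F(θ,z) = (θ+ω, e^{φ(θ)} z)` has the zero section as an indifferent
invariant curve which is not stable: there is no bounded open invariant tube with simply
connected fibers containing the zero section. -/
theorem furstenberg_example_not_stable (ω : ℝ) (hω : Irrational ω)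
    (φ : Torus1 → ℝ) (hφ : Continuous φ)
    (hmean : (∫ θ : Torus1, φ θ) = 0)
    (hnosol : ¬ ∃ ψ : Torus1 → ℝ, Continuous ψ ∧
      ∀ θ : Torus1, ψ (θ + (ω : Torus1)) - ψ θ = φ θ) :
    ¬ ∃ 𝒰 : Set (Torus1 × ℂ), IsOpen 𝒰 ∧
        Bornology.IsBounded (Prod.snd '' 𝒰) ∧
        (∀ θ : Torus1, (θ, (0:ℂ)) ∈ 𝒰) ∧
        (∀ p ∈ 𝒰, (p.1 + (ω : Torus1), (Real.exp (φ p.1) : ℂ) * p.2) ∈ 𝒰) ∧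
        (∀ θ : Torus1, IsConnected {z : ℂ | (θ, z) ∈ 𝒰} ∧
          SimplyConnectedSpace {z : ℂ // (θ, z) ∈ 𝒰}) := by
  rintro ⟨𝒰, hopen, hbdd, hzero, hinv, -⟩
  -- uniform tube radius δ
  obtain ⟨δ, hδ0, hδ⟩ : ∃ δ > 0, ∀ (θ : Torus1) (z : ℂ), ‖z‖ < δ → (θ, z) ∈ 𝒰 := by
    have hZc : IsCompact (range fun θ : Torus1 => (θ, (0:ℂ))) :=
      isCompact_range (continuous_id.prodMk continuous_const)
    have hZU : (range fun θ : Torus1 => (θ, (0:ℂ))) ⊆ 𝒰 := by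
      rintro - ⟨θ, rfl⟩; exact hzero θ
    obtain ⟨δ, hδ0, hδ⟩ := hZc.exists_cthickening_subset_open hopen hZU
    refine ⟨δ, hδ0, fun θ z hz => ?_⟩
    refine hδ (Metric.thickening_subset_cthickening _ _ ?_)
    rw [Metric.mem_thickening_iff]
    refine ⟨(θ, 0), ⟨θ, rfl⟩, ?_⟩
    rw [Prod.dist_eq]
    simp only [dist_self]
    rw [dist_zero_right]
    exact max_lt hδ0 hz
  -- bound M on second coordinates
  obtain ⟨M, hM⟩ := isBounded_iff_forall_norm_le.mp hbdd
  have hMp : ∀ p ∈ 𝒰, ‖p.2‖ ≤ M := fun p hp => hM _ (mem_image_of_mem _ hp)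
  -- iterate the dynamics
  have hiter : ∀ (n : ℕ) (θ : Torus1) (z : ℂ), (θ, z) ∈ 𝒰 →
      (θ + n • ((ω : ℝ) : Torus1), (Real.exp (birk ω φ n θ) : ℂ) * z) ∈ 𝒰 := by
    intro n
    induction n with
    | zero => intro θ z hz; simpa [birk_zero] using hz
    | succ n ih =>
        intro θ z hz
        have h1 := hinv _ (ih θ z hz)
        simp only at h1
        have heq : (θ + n • ((ω : ℝ) : Torus1) + (ω : Torus1),
            (Real.exp (φ (θ + n • ((ω : ℝ) : Torus1))) : ℂ) *
              ((Real.exp (birk ω φ n θ) : ℂ) * z))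
            = (θ + (n+1) • ((ω : ℝ) : Torus1), (Real.exp (birk ω φ (n+1) θ) : ℂ) * z) := by
          refine Prod.ext ?_ ?_
          · simp only []
            rw [add_assoc, ← succ_nsmul]
          · simp only []
            rw [birk_succ, Real.exp_add]
            push_cast
            ring
        rw [← heq]
        exact h1
  -- uniform upper bound on Birkhoff sums
  have hδ2 : ‖((δ/2 : ℝ) : ℂ)‖ < δ := by
    rw [Complex.norm_real, Real.norm_eq_abs, abs_of_pos (by linarith)]
    linarith
  have hMpos : 0 < M := by
    have := hMp _ (hδ 0 ((δ/2 : ℝ) : ℂ) hδ2)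
    simp only [Complex.norm_real, Real.norm_eq_abs] at this
    calc (0:ℝ) < δ/2 := by linarith
      _ = |δ/2| := (abs_of_pos (by linarith)).symm
      _ ≤ M := this
  set C₀ : ℝ := Real.log (M / (δ/2)) with hC₀
  have hub : ∀ (n : ℕ) (θ : Torus1), birk ω φ n θ ≤ C₀ := by
    intro n θ
    have hmem := hiter n θ ((δ/2 : ℝ) : ℂ) (hδ θ _ hδ2)
    have := hMp _ hmem
    simp only [norm_mul, Complex.norm_real, Real.norm_eq_abs,
      Real.abs_exp] at this
    have h2 : Real.exp (birk ω φ n θ) * (δ/2) ≤ M := by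
      calc Real.exp (birk ω φ n θ) * (δ/2)
          = Real.exp (birk ω φ n θ) * |δ/2| := by rw [abs_of_pos (by linarith)]
        _ ≤ M := this
    rw [hC₀, Real.le_log_iff_exp_le (div_pos hMpos (by linarith))]
    rw [le_div_iff₀ (by linarith)]
    exact h2
  -- Birkhoff sums integrate to zero
  have hint_c : ∀ c : Torus1, Integrable (fun θ => φ (θ + c)) (volume : Measure Torus1) := by
    intro c
    have hc : Continuous fun θ : Torus1 => φ (θ + c) := hφ.comp (continuous_add_right c)
    exact integrableOn_univ.mp (hc.continuousOn.integrableOn_compact isCompact_univ)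
  have hint : ∀ n : ℕ, (∫ θ : Torus1, birk ω φ n θ) = 0 := by
    intro n
    have : (∫ θ : Torus1, birk ω φ n θ)
        = ∑ k ∈ Finset.range n, ∫ θ : Torus1, φ (θ + k • ((ω : ℝ) : Torus1)) := by
      unfold birk
      exact integral_finset_sum _ (fun k _ => hint_c _)
    rw [this]
    refine Finset.sum_eq_zero fun k _ => ?_
    rw [integral_add_right_eq_self (fun θ : Torus1 => φ θ) (k • ((ω : ℝ) : Torus1))]
    exact hmean
  -- a point with nonnegative Birkhoff sum at each time N
  have hnonneg : ∀ N : ℕ, ∃ θ : Torus1, 0 ≤ birk ω φ N θ := by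
    intro N
    by_contra hcon
    push_neg at hcon
    set g : Torus1 → ℝ := fun θ => -(birk ω φ N θ) with hg
    have hgpos : ∀ θ, 0 < g θ := fun θ => by simp [hg]; linarith [hcon θ]
    have hgcont : Continuous g := (birk_continuous ω hφ N).neg
    have hgint : Integrable g (volume : Measure Torus1) :=
      integrableOn_univ.mp (hgcont.continuousOn.integrableOn_compact isCompact_univ)
    have hgzero : (∫ θ : Torus1, g θ) = 0 := by
      simp [hg, integral_neg, hint N]
    have hae := (integral_eq_zero_iff_of_nonneg (fun θ => (hgpos θ).le) hgint).mp hgzero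
    have h0 : (volume : Measure Torus1) {θ : Torus1 | ¬ g θ = (0 : Torus1 → ℝ) θ} = 0 :=
      ae_iff.mp hae
    have hsupp : {θ : Torus1 | ¬ g θ = (0 : Torus1 → ℝ) θ} = univ :=
      eq_univ_of_forall fun θ => (hgpos θ).ne'
    rw [hsupp] at h0
    have := AddCircle.measure_univ (T := (1:ℝ))
    rw [h0] at this
    simp at this
  -- lower bound up to time N
  have hlow : ∀ N : ℕ, ∃ θ : Torus1, ∀ n ≤ N, -C₀ ≤ birk ω φ n θ := by
    intro N
    obtain ⟨θ, hθ⟩ := hnonneg N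
    refine ⟨θ, fun n hn => ?_⟩
    have := birk_add ω φ n (N - n) θ
    rw [Nat.add_sub_cancel' hn] at this
    have h2 := hub (N - n) (θ + n • ((ω : ℝ) : Torus1))
    linarith
  -- compactness: a point with all sums bounded
  have hE : ∃ θ₀ : Torus1, ∀ n : ℕ, |birk ω φ n θ₀| ≤ C₀ := by
    set E : ℕ → Set Torus1 := fun N => {θ | ∀ n ≤ N, -C₀ ≤ birk ω φ n θ} with hEdef
    have hEclosed : ∀ N, IsClosed (E N) := by
      intro N
      have : E N = ⋂ (n : ℕ) (_ : n ≤ N), {θ | -C₀ ≤ birk ω φ n θ} := by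
        ext θ; simp [hEdef]
      rw [this]
      exact isClosed_iInter fun n => isClosed_iInter fun _ =>
        isClosed_le continuous_const (birk_continuous ω hφ n)
    have hEne : ∀ N, (E N).Nonempty := fun N => hlow N
    have hEsub : ∀ N, E (N+1) ⊆ E N := fun N θ hθ n hn => hθ n (hn.trans (Nat.le_succ N))
    obtain ⟨θ₀, hθ₀⟩ := IsCompact.nonempty_iInter_of_sequence_nonempty_isCompact_isClosed
      E hEsub hEne ((hEclosed 0).isCompact) hEclosed
    rw [mem_iInter] at hθ₀
    refine ⟨θ₀, fun n => abs_le.mpr ⟨hθ₀ n n le_rfl, hub n θ₀⟩⟩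
  obtain ⟨θ₀, hθ₀⟩ := hE
  exact hnosol (gottschalk_hedlund hω hφ hθ₀)
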